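/- Define U₀(T) = (P³(T) ∘ T³₀) and U₁(T) = (P³(T) ∘ T³₁) for a rooted tree T. Then for all rooted trees T₁, T₂: RSTI(U₀(T₁), U₁(T₂)) is false, RSTI(U₁(T₁), U₀(T₂)) is false, RSTI(U₀(T₁), U₀(T₂)) holds if and only if RSTI(T₁, T₂) holds, and RSTI(U₁(T₁), U₁(T₂)) holds if and only if RSTI(T₁, T₂) holds. -/

import Mathlib

/-- Finite rooted trees (lists of children; regarded as unordered via the
isomorphism notion below). -/
inductive RTree : Type where
  | node : List RTree → RTree

/-- `RSTI G H`: `G` is isomorphic to a rooted subtree of `H`, i.e. there is an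
injective map sending the root of `G` to the root of `H` and each child of a
node to a distinct child of its image, recursively. -/
inductive RSTI : RTree → RTree → Prop where
  | mk {cs ds : List RTree} (ι : Fin cs.length → Fin ds.length)
      (hinj : Function.Injective ι)
      (h : ∀ i : Fin cs.length, RSTI (cs.get i) (ds.get (ι i))) :
      RSTI (RTree.node cs) (RTree.node ds)

mutual
/-- Number of nodes of a rooted tree. -/
def RTree.size : RTree → ℕ
  | .node cs => 1 + sizeList cs
def sizeList : List RTree → ℕ
  | [] => 0
  | c :: cs => RTree.size c + sizeList cs
end

mutual
/-- Depth of a rooted tree (a single node has depth 0). -/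
def RTree.depth : RTree → ℕ
  | .node cs => depthList cs
def depthList : List RTree → ℕ
  | [] => 0
  | c :: cs => max (1 + RTree.depth c) (depthList cs)
end

/-- A rooted tree is binary if every node has at most two children. -/
inductive RTree.Binary : RTree → Prop where
  | mk {cs : List RTree} (hlen : cs.length ≤ 2) (h : ∀ c ∈ cs, RTree.Binary c) :
      RTree.Binary (RTree.node cs)

/-- `pathTo k T = P^k(T)`: a path of `k` nodes rooted at one end, with the
other end joined by an edge to the root of `T`. -/
def pathTo : ℕ → RTree → RTree
  | 0, T => T
  | k + 1, T => RTree.node [pathTo k T]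

/-- `(T_a ∘ T_b)`: the rooted tree whose root has exactly the two children
`T_a` and `T_b`. -/
def pairT (a b : RTree) : RTree := RTree.node [a, b]

/-- `T³₀`: the 3-node path rooted at an endpoint. -/
def T30 : RTree := RTree.node [RTree.node [RTree.node []]]

/-- `T³₁`: the 3-node rooted tree whose root has two leaf children. -/
def T31 : RTree := RTree.node [RTree.node [], RTree.node []]

/-- `U₀(T) = (P³(T) ∘ T³₀)`. -/
def U0 (T : RTree) : RTree := pairT (pathTo 3 T) T30

/-- `U₁(T) = (P³(T) ∘ T³₁)`. -/
def U1 (T : RTree) : RTree := pairT (pathTo 3 T) T31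

-- auxiliary lemmas
lemma le_depthList {c : RTree} {ds : List RTree} (h : c ∈ ds) :
    1 + c.depth ≤ depthList ds := by
  induction ds with
  | nil => simp at h
  | cons d ds ih =>
    rcases h with h | h
    · simp [depthList]
    · simp [depthList]; right; exact ih ‹_›

lemma depthList_le {cs : List RTree} {m : ℕ} (h : ∀ c ∈ cs, 1 + c.depth ≤ m) :
    depthList cs ≤ m := by
  induction cs with
  | nil => simp [depthList]
  | cons c cs ih =>
    simp [depthList]
    exact ⟨h c (by simp), ih fun x hx => h x (by simp [hx])⟩

lemma RSTI.depth_le {G H : RTree} (h : RSTI G H) : G.depth ≤ H.depth := by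
  induction h with
  | mk ι hinj hf ih =>
    show depthList _ ≤ depthList _
    apply depthList_le
    intro c hc
    obtain ⟨i, rfl⟩ := List.mem_iff_get.mp hc
    calc 1 + (_ : RTree).depth ≤ 1 + RTree.depth (_root_.List.get _ (ι i)) := by
          exact Nat.add_le_add_left (ih i) 1
      _ ≤ _ := le_depthList (List.get_mem _ (ι i))

lemma rsti_nil (ds : List RTree) : RSTI (RTree.node []) (RTree.node ds) :=
  RSTI.mk (fun i => i.elim0) (fun i => i.elim0) (fun i => i.elim0)

lemma rsti_cons_nil {x : RTree} {xs : List RTree} :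
    ¬ RSTI (RTree.node (x :: xs)) (RTree.node []) := by
  intro h
  cases h with
  | mk ι hinj hf => exact (ι ⟨0, by simp⟩).elim0

lemma rsti_single_iff {a b : RTree} :
    RSTI (RTree.node [a]) (RTree.node [b]) ↔ RSTI a b := by
  constructor
  · intro h
    cases h with
    | mk ι hinj hf =>
      have h0 := hf ⟨0, by simp⟩
      rcases hv : ι ⟨0, by simp⟩ with ⟨v, hv'⟩
      have : v < 1 := by simpa using hv'
      interval_cases v
      · rw [hv] at h0; exact h0
  · intro h
    exact RSTI.mk (fun i => i) (fun i j e => e) (by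
      intro i
      rcases i with ⟨v, hv'⟩
      have : v < 1 := by simpa using hv'
      interval_cases v
      · exact h)

lemma rsti_pair_elim {a b c d : RTree}
    (h : RSTI (RTree.node [a, b]) (RTree.node [c, d])) :
    (RSTI a c ∧ RSTI b d) ∨ (RSTI a d ∧ RSTI b c) := by
  cases h with
  | mk ι hinj hf =>
    have h0 := hf ⟨0, by simp⟩
    have h1 := hf ⟨1, by simp⟩
    rcases hv0 : ι ⟨0, by simp⟩ with ⟨v0, hv0'⟩
    rcases hv1 : ι ⟨1, by simp⟩ with ⟨v1, hv1'⟩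
    have hne : v0 ≠ v1 := by
      intro e
      have : (⟨0, by simp⟩ : Fin ([a,b].length)) = ⟨1, by simp⟩ :=
        hinj (by rw [hv0, hv1]; exact Fin.ext e)
      simp at this
    rw [hv0] at h0
    rw [hv1] at h1
    have hb0 : v0 < 2 := by simpa using hv0'
    have hb1 : v1 < 2 := by simpa using hv1'
    interval_cases v0 <;> interval_cases v1
    · exact absurd rfl hne
    · exact Or.inl ⟨h0, h1⟩
    · exact Or.inr ⟨h0, h1⟩
    · exact absurd rfl hne

lemma rsti_pair_intro {a b c d : RTree} (h1 : RSTI a c) (h2 : RSTI b d) :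
    RSTI (RTree.node [a, b]) (RTree.node [c, d]) := by
  refine RSTI.mk (fun i => i) (fun i j e => e) ?_
  intro i
  rcases i with ⟨v, hv'⟩
  have : v < 2 := by simpa using hv'
  interval_cases v
  · exact h1
  · exact h2

lemma rsti_two_one {a b c : RTree} :
    ¬ RSTI (RTree.node [a, b]) (RTree.node [c]) := by
  intro h
  cases h with
  | mk ι hinj hf =>
    have h01 : ι ⟨0, by simp⟩ = ι ⟨1, by simp⟩ := by
      apply Fin.ext
      have a0 := (ι ⟨0, by simp⟩).isLt
      have a1 := (ι ⟨1, by simp⟩).isLt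
      simp only [List.length_singleton] at a0 a1
      omega
    have := hinj h01
    simp at this

lemma pathTo3_eq (T : RTree) :
    pathTo 3 T = RTree.node [RTree.node [RTree.node [T]]] := by
  show pathTo (2+1) T = _
  rw [pathTo]
  show RTree.node [pathTo (1+1) T] = _
  rw [pathTo]
  show RTree.node [RTree.node [pathTo (0+1) T]] = _
  rw [pathTo, pathTo]

lemma depth_single (a : RTree) :
    (RTree.node [a]).depth = 1 + a.depth := by
  simp [RTree.depth, depthList]

lemma depth_pathTo3 (T : RTree) : (pathTo 3 T).depth = 3 + T.depth := by
  rw [pathTo3_eq, depth_single, depth_single, depth_single]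
  omega

lemma depth_T30 : T30.depth = 2 := by
  simp [T30, RTree.depth, depthList]

lemma depth_T31 : T31.depth = 1 := by
  simp [T31, RTree.depth, depthList]

lemma not_rsti_p3_T30 (T : RTree) : ¬ RSTI (pathTo 3 T) T30 := by
  intro h
  have := h.depth_le
  rw [depth_pathTo3, depth_T30] at this
  omega

lemma not_rsti_p3_T31 (T : RTree) : ¬ RSTI (pathTo 3 T) T31 := by
  intro h
  have := h.depth_le
  rw [depth_pathTo3, depth_T31] at this
  omega

lemma not_rsti_T30_T31 : ¬ RSTI T30 T31 := by
  intro h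
  have := h.depth_le
  rw [depth_T30, depth_T31] at this
  omega

lemma not_rsti_T31_T30 : ¬ RSTI T31 T30 := rsti_two_one

lemma rsti_T30_T30 : RSTI T30 T30 := by
  rw [T30, rsti_single_iff, rsti_single_iff]
  exact rsti_nil _

lemma rsti_T31_T31 : RSTI T31 T31 :=
  rsti_pair_intro (rsti_nil _) (rsti_nil _)

lemma rsti_p3_iff (T₁ T₂ : RTree) :
    RSTI (pathTo 3 T₁) (pathTo 3 T₂) ↔ RSTI T₁ T₂ := by
  rw [pathTo3_eq, pathTo3_eq, rsti_single_iff, rsti_single_iff, rsti_single_iff]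

/-- For all rooted trees `T₁, T₂`: `RSTI(U₀T₁, U₁T₂)` and
`RSTI(U₁T₁, U₀T₂)` fail, while `RSTI(U₀T₁, U₀T₂)` and `RSTI(U₁T₁, U₁T₂)` each
hold iff `RSTI(T₁, T₂)` holds. -/
theorem U0_U1_selector (T₁ T₂ : RTree) :
    ¬ RSTI (U0 T₁) (U1 T₂) ∧
    ¬ RSTI (U1 T₁) (U0 T₂) ∧
    (RSTI (U0 T₁) (U0 T₂) ↔ RSTI T₁ T₂) ∧
    (RSTI (U1 T₁) (U1 T₂) ↔ RSTI T₁ T₂) := by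
  refine ⟨?_, ?_, ?_, ?_⟩
  · intro h
    rcases rsti_pair_elim h with ⟨_, h2⟩ | ⟨h1, _⟩
    · exact not_rsti_T30_T31 h2
    · exact not_rsti_p3_T31 T₁ h1
  · intro h
    rcases rsti_pair_elim h with ⟨_, h2⟩ | ⟨h1, _⟩
    · exact not_rsti_T31_T30 h2
    · exact not_rsti_p3_T30 T₁ h1
  · constructor
    · intro h
      rcases rsti_pair_elim h with ⟨h1, _⟩ | ⟨h1, _⟩
      · exact (rsti_p3_iff T₁ T₂).mp h1
      · exact absurd h1 (not_rsti_p3_T30 T₁)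
    · intro h
      exact rsti_pair_intro ((rsti_p3_iff T₁ T₂).mpr h) rsti_T30_T30
  · constructor
    · intro h
      rcases rsti_pair_elim h with ⟨h1, _⟩ | ⟨h1, _⟩
      · exact (rsti_p3_iff T₁ T₂).mp h1
      · exact absurd h1 (not_rsti_p3_T31 T₁)
    · intro h
      exact rsti_pair_intro ((rsti_p3_iff T₁ T₂).mpr h) rsti_T31_T31
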